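/- Let q be a self-join-free Boolean conjunctive query, db a database instance, and V a nonempty subset of vars(q) such that for every v ∈ V and every atom F = R(x,y) of q, if F attacks v in q then the R-relation of db is consistent. Then there exists a repair r of db such that rifi(q,r,V) equals the intersection of rifi(q,s,V) over all repairs s of db. -/

import Mathlib

open scoped Classical

/-! ## Variables, constants, relation names -/

abbrev Var : Type := ℕ
abbrev RelName : Type := ℕ

/-- A term: a variable or a constant (a non-negative rational). -/
inductive Trm : Type where
  | var : Var → Trm
  | const : ℚ≥0 → Trm
deriving DecidableEq

/-- An atom `R(x̲, y)`: relation name, primary-key arguments, remaining arguments. -/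
structure DBAtom : Type where
  rel : RelName
  keyArgs : List Trm
  nonkeyArgs : List Trm
deriving DecidableEq, Inhabited

/-- A fact: an atom without variables. -/
structure DBFact : Type where
  rel : RelName
  keyArgs : List ℚ≥0
  nonkeyArgs : List ℚ≥0
deriving DecidableEq

def Trm.var? : Trm → Option Var
  | .var v => some v
  | .const _ => none

def Trm.const? : Trm → Option ℚ≥0
  | .var _ => none
  | .const c => some c

def DBAtom.keyVars (F : DBAtom) : Finset Var := (F.keyArgs.filterMap Trm.var?).toFinset

def DBAtom.allVars (F : DBAtom) : Finset Var :=
  ((F.keyArgs ++ F.nonkeyArgs).filterMap Trm.var?).toFinset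

def DBAtom.notkeyVars (F : DBAtom) : Finset Var := F.allVars \ F.keyVars

def qVars (q : List DBAtom) : Finset Var := q.foldr (fun F s => F.allVars ∪ s) ∅

/-- Self-join-free: pairwise distinct relation names. -/
def SelfJoinFree (q : List DBAtom) : Prop := (q.map DBAtom.rel).Nodup

def KeyEqual (f g : DBFact) : Prop := f.rel = g.rel ∧ f.keyArgs = g.keyArgs

def DBConsistent (s : Finset DBFact) : Prop :=
  ∀ f ∈ s, ∀ g ∈ s, KeyEqual f g → f = g

/-- A repair: an inclusion-maximal consistent subset. -/
def IsRepair (db r : Finset DBFact) : Prop :=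
  r ⊆ db ∧ DBConsistent r ∧
    ∀ s : Finset DBFact, r ⊆ s → s ⊆ db → DBConsistent s → s = r

/-! ## Valuations (partial maps from variables to constants) -/

abbrev Assignment : Type := Var → Option ℚ≥0

def Assignment.Dom (θ : Assignment) : Set Var := {v | θ v ≠ none}

def Assignment.ExtendsA (μ θ : Assignment) : Prop :=
  ∀ (v : Var) (c : ℚ≥0), θ v = some c → μ v = some c

noncomputable def Assignment.restrict (θ : Assignment) (S : Set Var) : Assignment :=
  fun v => if v ∈ S then θ v else none

def emptyAssignment : Assignment := fun _ => none

/-- Combination of two valuations (the first takes precedence). -/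
def Assignment.comb (θ μ : Assignment) : Assignment :=
  fun v => (θ v).orElse (fun _ => μ v)

def applyTrm (θ : Assignment) : Trm → Trm
  | .var v => (θ v).elim (Trm.var v) Trm.const
  | .const c => .const c

def applyAtom (θ : Assignment) (F : DBAtom) : DBAtom :=
  ⟨F.rel, F.keyArgs.map (applyTrm θ), F.nonkeyArgs.map (applyTrm θ)⟩

def applyQ (θ : Assignment) (q : List DBAtom) : List DBAtom := q.map (applyAtom θ)

def DBAtom.toFact? (F : DBAtom) : Option DBFact := do
  let ks ← F.keyArgs.mapM Trm.const?
  let ns ← F.nonkeyArgs.mapM Trm.const?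
  pure (DBFact.mk F.rel ks ns)

def AtomIn (s : Finset DBFact) (F : DBAtom) : Prop := ∃ f ∈ s, F.toFact? = some f

/-- `(s, θ) ⊨ q`: θ extends to a valuation over dom(θ) ∪ vars(q) mapping all atoms of q into s. -/
def Entails (s : Finset DBFact) (θ : Assignment) (q : List DBAtom) : Prop :=
  ∃ μ : Assignment, μ.Dom = θ.Dom ∪ ↑(qVars q) ∧ μ.ExtendsA θ ∧
    ∀ F ∈ q, AtomIn s (applyAtom μ F)

/-! ## Functional dependencies -/

def FDSatT (N : Set (Var → ℚ≥0)) (X Y : Finset Var) : Prop :=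
  ∀ t₁ ∈ N, ∀ t₂ ∈ N, (∀ x ∈ X, t₁ x = t₂ x) → ∀ y ∈ Y, t₁ y = t₂ y

/-- Standard logical implication of functional dependencies. -/
def FDImp (fds : Set (Finset Var × Finset Var)) (X Y : Finset Var) : Prop :=
  ∀ N : Set (Var → ℚ≥0), (∀ fd ∈ fds, FDSatT N fd.1 fd.2) → FDSatT N X Y

def FDSet (q : List DBAtom) : Set (Finset Var × Finset Var) :=
  {p | ∃ F ∈ q, p = (F.keyVars, F.allVars)}

def keycl (F : DBAtom) (q : List DBAtom) : Set Var :=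
  {x | x ∈ qVars q ∧ FDImp (FDSet (q.erase F)) F.keyVars {x}}

/-! ## Attacks and the attack graph -/

def AdjIn (q : List DBAtom) (a b : Var) : Prop :=
  ∃ G ∈ q, a ∈ G.allVars ∧ b ∈ G.allVars

/-- Atom F attacks variable x in q. -/
def AttacksVar (q : List DBAtom) (F : DBAtom) (x : Var) : Prop :=
  ∃ l : List Var, (∀ v ∈ l, v ∉ keycl F q) ∧
    (∃ h, l.head? = some h ∧ h ∈ F.notkeyVars) ∧
    l.getLast? = some x ∧ l.Chain' (AdjIn q)

def AttacksAtom (q : List DBAtom) (F G : DBAtom) : Prop :=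
  ∃ x ∈ G.allVars, AttacksVar q F x

def Unattacked (q : List DBAtom) (v : Var) : Prop := ∀ F ∈ q, ¬ AttacksVar q F v

/-- The list order of q is a topological sort of its (hence acyclic) attack graph. -/
def IsTopoSort (q : List DBAtom) : Prop :=
  ∀ i j : Fin q.length, q.get i ≠ q.get j →
    AttacksAtom q (q.get i) (q.get j) → (i : ℕ) < (j : ℕ)

/-! ## Embeddings and ∀embeddings (relative to the list order as topological sort) -/

def uVars (q : List DBAtom) (ℓ : ℕ) : Finset Var := qVars (q.take ℓ)

def headKey : List DBAtom → Finset Var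
  | [] => ∅
  | F :: _ => F.keyVars

/-- ℓ-embedding of q in db. -/
def IsLEmb (q : List DBAtom) (db : Finset DBFact) (ℓ : ℕ) (θ : Assignment) : Prop :=
  θ.Dom = ↑(uVars q ℓ) ∧ Entails db θ q

/-- ℓ-∀embedding of q in db. -/
def IsForallEmb (q : List DBAtom) (db : Finset DBFact) : ℕ → Assignment → Prop
  | 0, θ => IsLEmb q db 0 θ ∧ ∀ r, IsRepair db r → Entails r emptyAssignment q
  | (ℓ + 1), θ =>
      IsLEmb q db (ℓ + 1) θ ∧
      (∀ r, IsRepair db r →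
        Entails r (θ.restrict (↑(uVars q ℓ) ∪ ↑(headKey (q.drop ℓ)))) (q.drop ℓ)) ∧
      IsForallEmb q db ℓ (θ.restrict ↑(uVars q ℓ))

/-- An embedding of q in s: a valuation over vars(q) mapping all atoms of q into s. -/
def IsEmbedding (q : List DBAtom) (s : Finset DBFact) (θ : Assignment) : Prop :=
  θ.Dom = ↑(qVars q) ∧ ∀ F ∈ q, AtomIn s (applyAtom θ F)

/-- Superfrugal repair: every embedding of q in r is a ∀embedding of q in db. -/
def Superfrugal (q : List DBAtom) (db r : Finset DBFact) : Prop :=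
  IsRepair db r ∧ ∀ θ, IsEmbedding q r θ → IsForallEmb q db q.length θ

/-! ## FD satisfaction by sets of valuations; maximal consistent subsets (MCS) -/

def AgreeOn (θ₁ θ₂ : Assignment) (X : Finset Var) : Prop := ∀ x ∈ X, θ₁ x = θ₂ x

def SatFD (N : Set Assignment) (X Y : Finset Var) : Prop :=
  ∀ θ₁ ∈ N, ∀ θ₂ ∈ N, AgreeOn θ₁ θ₂ X → AgreeOn θ₁ θ₂ Y

def SatFDs (N : Set Assignment) (q : List DBAtom) : Prop :=
  ∀ fd ∈ FDSet q, SatFD N fd.1 fd.2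

/-- Maximal consistent subset of a set M of embeddings. -/
def IsMCS (q : List DBAtom) (M N : Set Assignment) : Prop :=
  N ⊆ M ∧ SatFDs N q ∧ ∀ N', N ⊆ N' → N' ⊆ M → SatFDs N' q → N' = N

/-! ## Aggregate operators -/

structure AggOp : Type where
  app : Multiset ℚ≥0 → ℚ
  nonneg : ∀ X : Multiset ℚ≥0, X ≠ 0 → 0 ≤ app X

noncomputable def AggOp.appNN (A : AggOp) (X : Multiset ℚ≥0) : ℚ≥0 := (A.app X).toNNRat

def AggOp.Assoc (A : AggOp) : Prop :=
  ∀ X Y : Multiset ℚ≥0, X ≠ 0 → A.app (X + Y) = A.app (A.appNN X ::ₘ Y)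

def AggOp.Mono (A : AggOp) : Prop :=
  ∀ x x' : List ℚ≥0, x ≠ [] → List.Forall₂ (· ≤ ·) x x' →
    ∀ Y : Multiset ℚ≥0, A.app ↑x ≤ A.app (↑x' + Y)

def evalTrm (θ : Assignment) : Trm → ℚ≥0
  | .var v => (θ v).getD 0
  | .const c => c

/-- The multiset of r-values over a (finite) set of valuations. -/
noncomputable def valsOf (N : Set Assignment) (r : Trm) : Multiset ℚ≥0 :=
  if h : N.Finite then h.toFinset.val.map (fun θ => evalTrm θ r) else 0

/-- Primitive numerical term: a (numerical) variable of the query, or a constant. -/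
def PrimTerm (q : List DBAtom) (r : Trm) : Prop :=
  (∃ v, r = Trm.var v ∧ v ∈ qVars q) ∨ (∃ c, r = Trm.const c)

/-! ## Branches and ∀key-embeddings -/

/-- γ is a branch of the ℓ-∀embedding θ. -/
def IsBranch (q : List DBAtom) (db : Finset DBFact) (ℓ : ℕ) (θ γ : Assignment) : Prop :=
  γ.ExtendsA θ ∧
  (∀ v ∈ γ.Dom \ θ.Dom, Unattacked (applyQ θ (q.drop ℓ)) v) ∧
  (∃ μ, IsForallEmb q db q.length μ ∧ μ.ExtendsA γ)

/-- γ is an (ℓ+1)-∀key-embedding: a branch of θ with domain dom(θ) ∪ key(F_{ℓ+1}). -/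
def IsKeyEmb (q : List DBAtom) (db : Finset DBFact) (ℓ : ℕ) (θ γ : Assignment) : Prop :=
  IsBranch q db ℓ θ γ ∧ γ.Dom = θ.Dom ∪ ↑(headKey (q.drop ℓ))

/-- M(θ): all ∀embeddings of q in db extending θ. -/
def Mset (q : List DBAtom) (db : Finset DBFact) (θ : Assignment) : Set Assignment :=
  {μ | IsForallEmb q db q.length μ ∧ μ.ExtendsA θ}

/-! ## Weakly connected components of the attack graph -/

def UndirectedEdge (p : List DBAtom) (F G : DBAtom) : Prop :=
  F ∈ p ∧ G ∈ p ∧ (AttacksAtom p F G ∨ AttacksAtom p G F)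

/-- S is a maximal weakly connected component of the attack graph of p. -/
def IsWCC (p : List DBAtom) (S : Set DBAtom) : Prop :=
  ∃ F₀ ∈ p, S = {G | Relation.ReflTransGen (UndirectedEdge p) F₀ G}

/-! ## rifi, sequential proofs, n-minimality -/

/-- rifi(q, s, V): valuations over V extending to a valuation over vars(q) mapping q into s. -/
def rifi (q : List DBAtom) (s : Finset DBFact) (V : Finset Var) : Set Assignment :=
  {θ | θ.Dom = ↑V ∧ ∃ μ : Assignment, μ.Dom = ↑(qVars q) ∧ μ.ExtendsA θ ∧
      ∀ F ∈ q, AtomIn s (applyAtom μ F)}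

/-- A sequential proof of FD(p) ⊨ Z → w. -/
def IsSeqProof (p : List DBAtom) (Z : Finset Var) (w : Var) (l : List DBAtom) : Prop :=
  (∀ F ∈ l, F ∈ p) ∧
  (∀ i : Fin l.length, (l.get i).keyVars ⊆ Z ∪ qVars (l.take i.1)) ∧
  w ∈ Z ∪ qVars l

/-- n-minimal repair (with X = vars(q)). -/
def NMinimal (q : List DBAtom) (db r : Finset DBFact) : Prop :=
  IsRepair db r ∧
  ¬ ∃ s : Finset DBFact, IsRepair db s ∧
      (∀ θ, IsEmbedding q s θ → IsEmbedding q r θ) ∧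
      (∃ μ, IsEmbedding q r μ ∧ ¬ IsEmbedding q s μ)

/-! ## Descending chains for aggregate operators -/

def DescChain {α β : Type*} [LT β] (F : Multiset α → β) (s t : α) : Prop :=
  ∀ i : ℕ, F (s ::ₘ Multiset.replicate (i + 1) t) < F (s ::ₘ Multiset.replicate i t)

def BoundedBy {α β : Type*} [LT β] (F : Multiset α → β) (s t : α) (m : ℕ → α) : Prop :=
  ∀ i j : ℕ, 1 ≤ j → ∀ k' k : ℕ, k' ≤ k → k ≤ i →
    F (s ::ₘ Multiset.replicate k' t) <
      F (Multiset.replicate j (m i) + (s ::ₘ Multiset.replicate k t))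

def HasBoundedDescChain {α β : Type*} [LT β] (F : Multiset α → β) : Prop :=
  ∃ s t, DescChain F s t ∧ ∃ m : ℕ → α, BoundedBy F s t m


/-! ### Auxiliary development for stmt3 -/

namespace Stmt3

/-- The canonical fact of an atom under an assignment. -/
def factOf (mu : Assignment) (F : DBAtom) : DBFact :=
  ⟨F.rel, F.keyArgs.map (evalTrm mu), F.nonkeyArgs.map (evalTrm mu)⟩

lemma keyEqual_refl (f : DBFact) : KeyEqual f f := ⟨rfl, rfl⟩

lemma keyEqual_symm {f g : DBFact} (h : KeyEqual f g) : KeyEqual g f :=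
  ⟨h.1.symm, h.2.symm⟩

lemma keyEqual_trans {f g h : DBFact} (h1 : KeyEqual f g) (h2 : KeyEqual g h) :
    KeyEqual f h := ⟨h1.1.trans h2.1, h1.2.trans h2.2⟩

lemma mem_qVars {q : List DBAtom} {x : Var} :
    x ∈ qVars q ↔ ∃ F ∈ q, x ∈ F.allVars := by
  induction q with
  | nil => simp [qVars]
  | cons F q ih =>
    simp only [qVars, List.foldr_cons, Finset.mem_union, List.mem_cons]
    constructor
    · rintro (h | h)
      · exact ⟨F, Or.inl rfl, h⟩
      · obtain ⟨G, hG, hx⟩ := ih.mp h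
        exact ⟨G, Or.inr hG, hx⟩
    · rintro ⟨G, (rfl | hG), hx⟩
      · exact Or.inl hx
      · exact Or.inr (ih.mpr ⟨G, hG, hx⟩)

lemma allVars_subset_qVars {q : List DBAtom} {F : DBAtom} (hF : F ∈ q) :
    ∀ x ∈ F.allVars, x ∈ qVars q := fun x hx => mem_qVars.mpr ⟨F, hF, hx⟩

lemma keyVars_subset_allVars (F : DBAtom) : ∀ x ∈ F.keyVars, x ∈ F.allVars := by
  intro x hx
  simp only [DBAtom.keyVars, List.mem_toFinset, List.mem_filterMap] at hx
  obtain ⟨t, ht, hv⟩ := hx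
  simp only [DBAtom.allVars, List.mem_toFinset, List.mem_filterMap]
  exact ⟨t, List.mem_append_left _ ht, hv⟩

lemma var_mem_keyArgs {F : DBAtom} {x : Var} (hx : x ∈ F.keyVars) :
    Trm.var x ∈ F.keyArgs := by
  simp only [DBAtom.keyVars, List.mem_toFinset, List.mem_filterMap] at hx
  obtain ⟨t, ht, hv⟩ := hx
  cases t with
  | var v => simp only [Trm.var?, Option.some.injEq] at hv; subst hv; exact ht
  | const c => simp [Trm.var?] at hv

lemma mem_allVars_of_arg {F : DBAtom} {x : Var}
    (h : Trm.var x ∈ F.keyArgs ∨ Trm.var x ∈ F.nonkeyArgs) : x ∈ F.allVars := by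
  simp only [DBAtom.allVars, List.mem_toFinset, List.mem_filterMap]
  refine ⟨Trm.var x, ?_, rfl⟩
  rcases h with h | h
  · exact List.mem_append_left _ h
  · exact List.mem_append_right _ h

lemma map_eq_map_mem {α β : Type*} {f g : α → β} :
    ∀ {l : List α}, l.map f = l.map g → ∀ a ∈ l, f a = g a := by
  intro l
  induction l with
  | nil => intro _ a ha; simp at ha
  | cons b l ih =>
    intro h a ha
    simp only [List.map_cons, List.cons.injEq] at h
    rcases List.mem_cons.mp ha with rfl | ha
    · exact h.1
    · exact ih h.2 a ha

lemma evalTrm_congr {mu nu : Assignment} {l : List Trm}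
    (h : ∀ v, Trm.var v ∈ l → mu v = nu v) :
    l.map (evalTrm mu) = l.map (evalTrm nu) := by
  apply List.map_congr_left
  intro t ht
  cases t with
  | var v => simp only [evalTrm, h v ht]
  | const c => rfl

lemma factOf_congr {mu nu : Assignment} {F : DBAtom}
    (h : ∀ v ∈ F.allVars, mu v = nu v) : factOf mu F = factOf nu F := by
  unfold factOf
  congr 1
  · exact evalTrm_congr fun v hv => h v (mem_allVars_of_arg (Or.inl hv))
  · exact evalTrm_congr fun v hv => h v (mem_allVars_of_arg (Or.inr hv))

lemma mapM_const?_map (mu : Assignment) (l : List Trm)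
    (h : ∀ v, Trm.var v ∈ l → (mu v).isSome) :
    (l.map (applyTrm mu)).mapM Trm.const? = some (l.map (evalTrm mu)) := by
  induction l with
  | nil => rfl
  | cons t ts ih =>
    have ht : (applyTrm mu t).const? = some (evalTrm mu t) := by
      cases t with
      | var v =>
        have := h v List.mem_cons_self
        obtain ⟨c, hc⟩ := Option.isSome_iff_exists.mp this
        simp [applyTrm, evalTrm, hc, Trm.const?]
      | const c => simp [applyTrm, evalTrm, Trm.const?]
    have hts := ih (fun v hv => h v (List.mem_cons_of_mem _ hv))
    simp only [List.map_cons, List.mapM_cons, ht, hts]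
    rfl

lemma toFact?_eq (mu : Assignment) (F : DBAtom)
    (h : ∀ v ∈ F.allVars, (mu v).isSome) :
    (applyAtom mu F).toFact? = some (factOf mu F) := by
  have hk : ∀ v, Trm.var v ∈ F.keyArgs → (mu v).isSome :=
    fun v hv => h v (mem_allVars_of_arg (Or.inl hv))
  have hn : ∀ v, Trm.var v ∈ F.nonkeyArgs → (mu v).isSome :=
    fun v hv => h v (mem_allVars_of_arg (Or.inr hv))
  unfold DBAtom.toFact? applyAtom
  simp only [mapM_const?_map mu F.keyArgs hk, mapM_const?_map mu F.nonkeyArgs hn]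
  rfl

lemma isSome_of_dom {mu : Assignment} {S : Finset Var}
    (hdom : mu.Dom = ↑S) {v : Var} (hv : v ∈ S) : (mu v).isSome := by
  have : v ∈ mu.Dom := by rw [hdom]; exact_mod_cast hv
  exact Option.ne_none_iff_isSome.mp this

lemma atomIn_iff {s : Finset DBFact} {mu : Assignment} {F : DBAtom}
    (h : ∀ v ∈ F.allVars, (mu v).isSome) :
    AtomIn s (applyAtom mu F) ↔ factOf mu F ∈ s := by
  unfold AtomIn
  rw [toFact?_eq mu F h]
  constructor
  · rintro ⟨f, hf, hf2⟩
    obtain rfl : factOf mu F = f := by injection hf2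
    exact hf
  · intro hf; exact ⟨_, hf, rfl⟩

/-- Membership in `rifi` in terms of `factOf`. -/
lemma mem_rifi_iff {q : List DBAtom} {s : Finset DBFact} {V : Finset Var}
    {θ : Assignment} :
    θ ∈ rifi q s V ↔ θ.Dom = ↑V ∧ ∃ mu : Assignment, mu.Dom = ↑(qVars q) ∧
      mu.ExtendsA θ ∧ ∀ F ∈ q, factOf mu F ∈ s := by
  unfold rifi
  simp only [Set.mem_setOf_eq]
  constructor
  · rintro ⟨hd, mu, hmd, hext, hf⟩
    refine ⟨hd, mu, hmd, hext, fun F hF => ?_⟩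
    have := hf F hF
    rwa [atomIn_iff (fun v hv => isSome_of_dom hmd (allVars_subset_qVars hF v hv))] at this
  · rintro ⟨hd, mu, hmd, hext, hf⟩
    refine ⟨hd, mu, hmd, hext, fun F hF => ?_⟩
    rw [atomIn_iff (fun v hv => isSome_of_dom hmd (allVars_subset_qVars hF v hv))]
    exact hf F hF


lemma mem_keyVars_of_arg {F : DBAtom} {x : Var} (h : Trm.var x ∈ F.keyArgs) :
    x ∈ F.keyVars := by
  simp only [DBAtom.keyVars, List.mem_toFinset, List.mem_filterMap]
  exact ⟨Trm.var x, h, rfl⟩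

lemma arg_of_mem_allVars {F : DBAtom} {x : Var} (h : x ∈ F.allVars) :
    Trm.var x ∈ F.keyArgs ∨ Trm.var x ∈ F.nonkeyArgs := by
  simp only [DBAtom.allVars, List.mem_toFinset, List.mem_filterMap] at h
  obtain ⟨t, ht, hv⟩ := h
  cases t with
  | var v =>
    simp only [Trm.var?, Option.some.injEq] at hv; subst hv
    exact List.mem_append.mp ht
  | const c => simp [Trm.var?] at hv

/-- In a consistent instance, each atom's key functionally determines all its
variables, for total valuations realizing the atom. -/
lemma fd_of_consistent {s : Finset DBFact} (hs : DBConsistent s) (G : DBAtom)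
    {t1 t2 : Var → ℚ≥0}
    (h1 : factOf (fun v => some (t1 v)) G ∈ s)
    (h2 : factOf (fun v => some (t2 v)) G ∈ s)
    (hk : ∀ x ∈ G.keyVars, t1 x = t2 x) :
    ∀ y ∈ G.allVars, t1 y = t2 y := by
  set σ1 : Assignment := fun v => some (t1 v)
  set σ2 : Assignment := fun v => some (t2 v)
  have hkeyargs : G.keyArgs.map (evalTrm σ1) = G.keyArgs.map (evalTrm σ2) := by
    apply evalTrm_congr
    intro v hv
    have := hk v (mem_keyVars_of_arg hv)
    simp [σ1, σ2, this]
  have hke : KeyEqual (factOf σ1 G) (factOf σ2 G) := ⟨rfl, hkeyargs⟩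
  have heq := hs _ h1 _ h2 hke
  have hnk : G.nonkeyArgs.map (evalTrm σ1) = G.nonkeyArgs.map (evalTrm σ2) := by
    have := congrArg DBFact.nonkeyArgs heq
    simpa [factOf] using this
  intro y hy
  rcases arg_of_mem_allVars hy with h | h
  · have := map_eq_map_mem hkeyargs _ h
    simpa [evalTrm, σ1, σ2] using this
  · have := map_eq_map_mem hnk _ h
    simpa [evalTrm, σ1, σ2] using this

/-- Determinacy on `keycl`: two valuations realizing `q.erase F` in a consistent
instance and agreeing on `key(F)` agree on `keycl F q`. -/
lemma keycl_det {q : List DBAtom} {F : DBAtom} {s : Finset DBFact}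
    (hs : DBConsistent s) {mu1 mu2 : Assignment}
    (hdom1 : mu1.Dom = ↑(qVars q)) (hdom2 : mu2.Dom = ↑(qVars q))
    (h1 : ∀ G ∈ q.erase F, factOf mu1 G ∈ s)
    (h2 : ∀ G ∈ q.erase F, factOf mu2 G ∈ s)
    (hkey : ∀ x ∈ F.keyVars, mu1 x = mu2 x)
    {x : Var} (hx : x ∈ keycl F q) : mu1 x = mu2 x := by
  obtain ⟨hxq, himp⟩ := hx
  set t1 : Var → ℚ≥0 := fun v => (mu1 v).getD 0
  set t2 : Var → ℚ≥0 := fun v => (mu2 v).getD 0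
  set N : Set (Var → ℚ≥0) :=
    {t | ∀ G ∈ q.erase F, factOf (fun v => some (t v)) G ∈ s}
  have hfact : ∀ (mu : Assignment) (G : DBAtom),
      factOf (fun v => some ((mu v).getD 0)) G = factOf mu G := by
    intro mu G
    unfold factOf
    congr 1 <;>
      · apply List.map_congr_left
        intro t ht
        cases t <;> rfl
  have hN : ∀ fd ∈ FDSet (q.erase F), FDSatT N fd.1 fd.2 := by
    rintro fd hfd
    obtain ⟨G, hG, rfl⟩ := hfd
    intro u1 hu1 u2 hu2 hagree
    exact fd_of_consistent hs G (hu1 G hG) (hu2 G hG) hagree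
  have ht1 : t1 ∈ N := by
    intro G hG; rw [hfact mu1 G]; exact h1 G hG
  have ht2 : t2 ∈ N := by
    intro G hG; rw [hfact mu2 G]; exact h2 G hG
  have hagree : ∀ y ∈ F.keyVars, t1 y = t2 y := by
    intro y hy; simp [t1, t2, hkey y hy]
  have := himp N hN t1 ht1 t2 ht2 hagree x (Finset.mem_singleton_self x)
  have hs1 := isSome_of_dom hdom1 hxq
  have hs2 := isSome_of_dom hdom2 hxq
  obtain ⟨c1, hc1⟩ := Option.isSome_iff_exists.mp hs1
  obtain ⟨c2, hc2⟩ := Option.isSome_iff_exists.mp hs2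
  simp only [t1, t2, hc1, hc2, Option.getD_some] at this
  rw [hc1, hc2, this]


lemma keyVars_subset_keycl {q : List DBAtom} {F : DBAtom} (hF : F ∈ q) :
    ∀ x ∈ F.keyVars, x ∈ keycl F q := by
  intro x hx
  refine ⟨allVars_subset_qVars hF x (keyVars_subset_allVars F x hx), ?_⟩
  intro N _ t1 ht1 t2 ht2 hagree y hy
  rw [Finset.mem_singleton] at hy; subst hy
  exact hagree _ hx

lemma attacks_not_keycl {q : List DBAtom} {F : DBAtom} {x : Var}
    (h : AttacksVar q F x) : x ∉ keycl F q := by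
  obtain ⟨l, hnk, _, hlast, _⟩ := h
  exact hnk x (List.mem_of_mem_getLast? (by rw [hlast]; rfl))

lemma attacks_single {q : List DBAtom} {F : DBAtom} {x : Var}
    (hx : x ∈ F.notkeyVars) (hk : x ∉ keycl F q) : AttacksVar q F x := by
  refine ⟨[x], ?_, ⟨x, rfl, hx⟩, rfl, ?_⟩
  · intro v hv; rw [List.mem_singleton] at hv; subst hv; exact hk
  · exact List.isChain_singleton x

lemma attacks_extend {q : List DBAtom} {F G : DBAtom} {a b : Var}
    (hatt : AttacksVar q F a) (hG : G ∈ q) (ha : a ∈ G.allVars)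
    (hb : b ∈ G.allVars) (hbk : b ∉ keycl F q) : AttacksVar q F b := by
  obtain ⟨l, hnk, ⟨h, hh, hhnk⟩, hlast, hchain⟩ := hatt
  have hlne : l ≠ [] := by
    intro h0; rw [h0] at hh; simp at hh
  refine ⟨l ++ [b], ?_, ⟨h, ?_, hhnk⟩, ?_, ?_⟩
  · intro v hv
    rcases List.mem_append.mp hv with hv | hv
    · exact hnk v hv
    · rw [List.mem_singleton] at hv; subst hv; exact hbk
  · rw [List.head?_append_of_ne_nil _ hlne]; exact hh
  · exact List.getLast?_concat
  · show List.IsChain _ _; rw [List.isChain_append]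
    refine ⟨hchain, List.isChain_singleton b, ?_⟩
    intro x hx y hy
    rw [hlast, Option.mem_some_iff] at hx
    simp only [List.head?_cons, Option.mem_some_iff] at hy
    subst hx; subst hy
    exact ⟨G, hG, ha, hb⟩

/-- The splice lemma: given a partial realization `mu1` of `q.erase F` and a full
realization `mu2` of `q` in a consistent instance agreeing on `key(F)`, one can
realize all of `q`, agreeing with `mu1` on all variables not attacked by `F`. -/
lemma splice {q : List DBAtom} (hnd : q.Nodup) {F : DBAtom} (hF : F ∈ q)
    {s : Finset DBFact} (hs : DBConsistent s) {mu1 mu2 : Assignment}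
    (hdom1 : mu1.Dom = ↑(qVars q)) (hdom2 : mu2.Dom = ↑(qVars q))
    (h1 : ∀ G ∈ q.erase F, factOf mu1 G ∈ s)
    (h2 : ∀ G ∈ q, factOf mu2 G ∈ s)
    (hkey : ∀ x ∈ F.keyVars, mu1 x = mu2 x) :
    ∃ nu : Assignment, nu.Dom = ↑(qVars q) ∧
      (∀ v, ¬ AttacksVar q F v → nu v = mu1 v) ∧
      ∀ G ∈ q, factOf nu G ∈ s := by
  classical
  set nu : Assignment := fun v => if AttacksVar q F v then mu2 v else mu1 v with hnu
  have h2' : ∀ G ∈ q.erase F, factOf mu2 G ∈ s := fun G hG =>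
    h2 G (List.mem_of_mem_erase hG)
  have hdet : ∀ x ∈ keycl F q, mu1 x = mu2 x :=
    fun x hx => keycl_det hs hdom1 hdom2 h1 h2' hkey hx
  have hdomnu : nu.Dom = ↑(qVars q) := by
    ext v
    by_cases hv : AttacksVar q F v
    · show (nu v ≠ none) ↔ _
      simp only [hnu, if_pos hv]
      have : v ∈ mu2.Dom ↔ v ∈ (↑(qVars q) : Set Var) := by rw [hdom2]
      exact this
    · show (nu v ≠ none) ↔ _
      simp only [hnu, if_neg hv]
      have : v ∈ mu1.Dom ↔ v ∈ (↑(qVars q) : Set Var) := by rw [hdom1]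
      exact this
  refine ⟨nu, hdomnu, ?_, ?_⟩
  · intro v hv; simp only [hnu, if_neg hv]
  · intro G hG
    by_cases hcase : ∃ a ∈ G.allVars, AttacksVar q F a
    · -- all variables of G get mu2-values
      obtain ⟨a, ha, hatta⟩ := hcase
      have : ∀ y ∈ G.allVars, nu y = mu2 y := by
        intro y hy
        by_cases hy2 : AttacksVar q F y
        · simp only [hnu, if_pos hy2]
        · have hyk : y ∈ keycl F q := by
            by_contra hyk
            exact hy2 (attacks_extend hatta hG ha hy hyk)
          simp only [hnu, if_neg hy2]
          exact hdet y hyk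
      rw [factOf_congr this]
      exact h2 G hG
    · push_neg at hcase
      by_cases hGF : G = F
      · subst hGF
        -- all vars of G are in keycl, so mu1 = mu2 on them
        have : ∀ y ∈ G.allVars, nu y = mu2 y := by
          intro y hy
          have hyk : y ∈ keycl G q := by
            by_cases hyKey : y ∈ G.keyVars
            · exact keyVars_subset_keycl hG y hyKey
            · have hynk : y ∈ G.notkeyVars := Finset.mem_sdiff.mpr ⟨hy, hyKey⟩
              by_contra hyk
              exact hcase y hy (attacks_single hynk hyk)
          simp only [hnu, if_neg (fun h => attacks_not_keycl h hyk)]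
          exact hdet y hyk
        rw [factOf_congr this]
        exact h2 G hG
      · have : ∀ y ∈ G.allVars, nu y = mu1 y := by
          intro y hy
          simp only [hnu, if_neg (hcase y hy)]
        rw [factOf_congr this]
        exact h1 G (hnd.mem_erase_iff.mpr ⟨hGF, hG⟩)


instance : DecidableEq DBFact := by infer_instance

instance (f g : DBFact) : Decidable (KeyEqual f g) := by
  unfold KeyEqual; infer_instance

lemma consistent_mono {s t : Finset DBFact} (h : s ⊆ t) (ht : DBConsistent t) :
    DBConsistent s := fun f hf g hg hke => ht f (h hf) g (h hg) hke

lemma consistent_empty : DBConsistent (∅ : Finset DBFact) := by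
  intro f hf; simp at hf

lemma exists_repair_sup (db c : Finset DBFact) (hc : c ⊆ db)
    (hcc : DBConsistent c) : ∃ r, IsRepair db r ∧ c ⊆ r := by
  classical
  set S : Finset (Finset DBFact) :=
    db.powerset.filter (fun s => DBConsistent s ∧ c ⊆ s) with hS
  have hcS : c ∈ S := by
    simp only [hS, Finset.mem_filter, Finset.mem_powerset]
    exact ⟨hc, hcc, Finset.Subset.refl c⟩
  obtain ⟨r, hrS, hrmax⟩ := S.exists_max_image Finset.card ⟨c, hcS⟩
  simp only [hS, Finset.mem_filter, Finset.mem_powerset] at hrS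
  obtain ⟨hrdb, hrcons, hcr⟩ := hrS
  refine ⟨r, ⟨hrdb, hrcons, ?_⟩, hcr⟩
  intro s hrs hsdb hscons
  have hsS : s ∈ S := by
    simp only [hS, Finset.mem_filter, Finset.mem_powerset]
    exact ⟨hsdb, hscons, hcr.trans hrs⟩
  exact (Finset.eq_of_subset_of_card_le hrs (hrmax s hsS)).symm

lemma exists_repair (db : Finset DBFact) : ∃ r, IsRepair db r := by
  obtain ⟨r, hr, _⟩ := exists_repair_sup db ∅ (Finset.empty_subset db) consistent_empty
  exact ⟨r, hr⟩

/-- Every repair contains a representative of every key-group present in db. -/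
lemma repair_rep {db r : Finset DBFact} (hr : IsRepair db r) {f : DBFact}
    (hf : f ∈ db) : ∃ f' ∈ r, KeyEqual f' f := by
  by_cases hmem : ∃ f' ∈ r, KeyEqual f' f
  · exact hmem
  · push_neg at hmem
    exfalso
    have hcons : DBConsistent (insert f r) := by
      intro a ha b hb hke
      rcases Finset.mem_insert.mp ha with ha' | ha'
      · rcases Finset.mem_insert.mp hb with hb' | hb'
        · rw [ha', hb']
        · exfalso; subst ha'; exact hmem b hb' (keyEqual_symm hke)
      · rcases Finset.mem_insert.mp hb with hb' | hb'
        · exfalso; subst hb'; exact hmem a ha' hke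
        · exact hr.2.1 a ha' b hb' hke
    have := hr.2.2 (insert f r) (Finset.subset_insert f r)
      (Finset.insert_subset hf hr.1) hcons
    have hfr : f ∈ r := this ▸ Finset.mem_insert_self f r
    exact hmem f hfr (keyEqual_refl f)

/-- Flip a repair: replace the fact key-equal to `f` by `f`. -/
noncomputable def flipR (p : Finset DBFact) (f : DBFact) : Finset DBFact :=
  insert f (p.filter (fun x => ¬ KeyEqual x f))

lemma mem_flipR {p : Finset DBFact} {f x : DBFact} :
    x ∈ flipR p f ↔ x = f ∨ (x ∈ p ∧ ¬ KeyEqual x f) := by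
  unfold flipR
  simp [Finset.mem_insert, Finset.mem_filter]

lemma mem_flipR_self (p : Finset DBFact) (f : DBFact) : f ∈ flipR p f :=
  mem_flipR.mpr (Or.inl rfl)

lemma flipR_subset {db p : Finset DBFact} (hp : p ⊆ db) {f : DBFact}
    (hf : f ∈ db) : flipR p f ⊆ db := by
  intro x hx
  rcases mem_flipR.mp hx with rfl | ⟨hxp, _⟩
  · exact hf
  · exact hp hxp

lemma flipR_consistent {p : Finset DBFact} (hp : DBConsistent p) (f : DBFact) :
    DBConsistent (flipR p f) := by
  intro a ha b hb hke
  rcases mem_flipR.mp ha with rfl | ⟨hap, hanke⟩ <;>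
    rcases mem_flipR.mp hb with rfl | ⟨hbp, hbnke⟩
  · rfl
  · exact absurd (keyEqual_symm hke) hbnke
  · exact absurd hke hanke
  · exact hp a hap b hbp hke

lemma flipR_repair {db p : Finset DBFact} (hp : IsRepair db p) {f : DBFact}
    (hf : f ∈ db) : IsRepair db (flipR p f) := by
  refine ⟨flipR_subset hp.1 hf, flipR_consistent hp.2.1 f, ?_⟩
  intro s hsub hsdb hscons
  apply Finset.Subset.antisymm _ hsub
  intro x hx
  by_cases hxf : KeyEqual x f
  · have hfs : f ∈ s := hsub (mem_flipR_self p f)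
    have := hscons x hx f hfs hxf
    rw [this]
    exact mem_flipR_self p f
  · rw [mem_flipR]
    right
    refine ⟨?_, hxf⟩
    by_cases hxp : x ∈ p
    · exact hxp
    · exfalso
      -- x ∈ db, x ∉ p: p maximal gives a conflicting y ∈ p
      have hxdb : x ∈ db := hsdb hx
      obtain ⟨y, hyp, hyke⟩ := repair_rep hp hxdb
      have hyx : y ≠ x := fun h => hxp (h ▸ hyp)
      -- y is not key-equal to f, hence y survives into flipR p f ⊆ s
      have hynkef : ¬ KeyEqual y f := by
        intro h
        exact hxf (keyEqual_trans (keyEqual_symm hyke) h)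
      have hys : y ∈ s := hsub (mem_flipR.mpr (Or.inr ⟨hyp, hynkef⟩))
      exact hyx (hscons y hys x hx hyke)

/-- Freezing a group to `f`: repairs of `flipR db f` are exactly repairs of `db`
containing `f`. -/
lemma freeze_repair_iff {db : Finset DBFact} {f : DBFact} (hf : f ∈ db)
    {p : Finset DBFact} :
    IsRepair (flipR db f) p ↔ (IsRepair db p ∧ f ∈ p) := by
  constructor
  · rintro ⟨hsub, hcons, hmax⟩
    have hfp : f ∈ p := by
      obtain ⟨f', hf'p, hf'ke⟩ := repair_rep ⟨hsub, hcons, hmax⟩ (mem_flipR_self db f)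
      rcases mem_flipR.mp (hsub hf'p) with rfl | ⟨_, hnke⟩
      · exact hf'p
      · exact absurd hf'ke hnke
    have hpdb : p ⊆ db := hsub.trans (flipR_subset (Finset.Subset.refl db) hf)
    refine ⟨⟨hpdb, hcons, ?_⟩, hfp⟩
    intro s hps hsdb hscons
    apply hmax s hps _ hscons
    intro x hxs
    by_cases hxf : KeyEqual x f
    · have := hscons x hxs f (hps hfp) hxf
      rw [this]; exact mem_flipR_self db f
    · exact mem_flipR.mpr (Or.inr ⟨hsdb hxs, hxf⟩)
  · rintro ⟨⟨hpdb, hcons, hmax⟩, hfp⟩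
    refine ⟨?_, hcons, ?_⟩
    · intro x hxp
      by_cases hxf : KeyEqual x f
      · have := hcons x hxp f hfp hxf
        rw [this]; exact mem_flipR_self db f
      · exact mem_flipR.mpr (Or.inr ⟨hpdb hxp, hxf⟩)
    · intro s hps hsdb hscons
      exact hmax s hps (hsdb.trans (flipR_subset (Finset.Subset.refl db) hf)) hscons

lemma flipR_card_lt {db : Finset DBFact} {f f2 : DBFact} (hf : f ∈ db)
    (hf2 : f2 ∈ db) (hne : f2 ≠ f) (hke : KeyEqual f2 f) :
    (flipR db f).card < db.card := by
  have hsub : flipR db f ⊆ db.erase f2 := by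
    intro x hx
    rcases mem_flipR.mp hx with rfl | ⟨hxdb, hxnke⟩
    · exact Finset.mem_erase.mpr ⟨fun h => hne h.symm, hf⟩
    · exact Finset.mem_erase.mpr ⟨fun h => hxnke (h ▸ hke), hxdb⟩
  calc (flipR db f).card ≤ (db.erase f2).card := Finset.card_le_card hsub
    _ < db.card := Finset.card_erase_lt_of_mem hf2

/-- Minimum for a total transitive relation on a nonempty finset. -/
lemma exists_min_total {α : Type*} (R : α → α → Prop)
    (htrans : ∀ a b c, R a b → R b c → R a c) :
    ∀ (t : Finset α), t.Nonempty → (∀ a ∈ t, ∀ b ∈ t, R a b ∨ R b a) →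
    ∃ a ∈ t, ∀ b ∈ t, R a b := by
  classical
  intro t
  induction t using Finset.induction_on with
  | empty => intro h; simp at h
  | @insert a t ha ih =>
    intro _ htotal
    rcases t.eq_empty_or_nonempty with rfl | htne
    · refine ⟨a, Finset.mem_insert_self a _, ?_⟩
      intro b hb
      simp only [Finset.mem_insert, Finset.notMem_empty, or_false] at hb
      subst hb
      rcases htotal b (Finset.mem_insert_self b _) b (Finset.mem_insert_self b _) with h | h
        <;> exact h
    · obtain ⟨m, hmt, hmmin⟩ := ih htne (fun x hx y hy =>
        htotal x (Finset.mem_insert_of_mem hx) y (Finset.mem_insert_of_mem hy))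
      have haa : R a a := by
        rcases htotal a (Finset.mem_insert_self a _) a (Finset.mem_insert_self a _) with h | h
          <;> exact h
      rcases htotal m (Finset.mem_insert_of_mem hmt) a (Finset.mem_insert_self a _) with h | h
      · refine ⟨m, Finset.mem_insert_of_mem hmt, ?_⟩
        intro b hb
        rcases Finset.mem_insert.mp hb with rfl | hb
        · exact h
        · exact hmmin b hb
      · refine ⟨a, Finset.mem_insert_self a t, ?_⟩
        intro b hb
        rcases Finset.mem_insert.mp hb with rfl | hb
        · exact haa
        · exact htrans a m b h (hmmin b hb)


lemma key_agree_of_factOf {q : List DBAtom} {G : DBAtom} (hG : G ∈ q)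
    {mu1 mu2 : Assignment}
    (hdom1 : mu1.Dom = ↑(qVars q)) (hdom2 : mu2.Dom = ↑(qVars q))
    (h : (factOf mu1 G).keyArgs = (factOf mu2 G).keyArgs) :
    ∀ x ∈ G.keyVars, mu1 x = mu2 x := by
  intro x hx
  have harg := var_mem_keyArgs hx
  have heq : evalTrm mu1 (Trm.var x) = evalTrm mu2 (Trm.var x) :=
    map_eq_map_mem (l := G.keyArgs) h _ harg
  have h1s := isSome_of_dom hdom1 (allVars_subset_qVars hG x (keyVars_subset_allVars G x hx))
  have h2s := isSome_of_dom hdom2 (allVars_subset_qVars hG x (keyVars_subset_allVars G x hx))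
  obtain ⟨c1, hc1⟩ := Option.isSome_iff_exists.mp h1s
  obtain ⟨c2, hc2⟩ := Option.isSome_iff_exists.mp h2s
  rw [hc1, hc2]
  simp only [evalTrm, hc1, hc2, Option.getD_some] at heq
  rw [heq]

/-- Transport of a `rifi`-member via the splice lemma. -/
lemma rifi_transport {q : List DBAtom} (hnd : q.Nodup) {G : DBAtom} (hG : G ∈ q)
    {s : Finset DBFact} (hs : DBConsistent s) {V : Finset Var}
    (hatt : ∀ v ∈ V, ¬ AttacksVar q G v)
    {θ mu1 mu2 : Assignment}
    (hθd : θ.Dom = ↑V)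
    (hdom1 : mu1.Dom = ↑(qVars q)) (hdom2 : mu2.Dom = ↑(qVars q))
    (hext : mu1.ExtendsA θ)
    (h1 : ∀ H ∈ q.erase G, factOf mu1 H ∈ s)
    (h2 : ∀ H ∈ q, factOf mu2 H ∈ s)
    (hkey : ∀ x ∈ G.keyVars, mu1 x = mu2 x) :
    θ ∈ rifi q s V := by
  obtain ⟨nu, hnud, hnu1, hnuf⟩ := splice hnd hG hs hdom1 hdom2 h1 h2 hkey
  rw [mem_rifi_iff]
  refine ⟨hθd, nu, hnud, ?_, hnuf⟩
  intro v c hvc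
  have hvV : v ∈ V := by
    have hd : v ∈ θ.Dom := by show θ v ≠ none; simp [hvc]
    rw [hθd] at hd; exact_mod_cast hd
  rw [hnu1 v (hatt v hvV)]
  exact hext v c hvc

/-- The key comparability lemma: minima of two branches of one key-group are
comparable. -/
lemma rifi_comparable {q : List DBAtom} (hsjf : SelfJoinFree q)
    {db : Finset DBFact} {V : Finset Var}
    (hcons : ∀ v ∈ V, ∀ F ∈ q, AttacksVar q F v →
      DBConsistent (db.filter (fun f => f.rel = F.rel)))
    {fA fB : DBFact} (hfA : fA ∈ db) (hfB : fB ∈ db) (hKE : KeyEqual fA fB)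
    {A B : Finset DBFact}
    (hA : IsRepair db A) (hfAA : fA ∈ A)
    (hAmin : ∀ p, IsRepair db p → fA ∈ p → rifi q A V ⊆ rifi q p V)
    (hB : IsRepair db B) (hfBB : fB ∈ B)
    (hBmin : ∀ p, IsRepair db p → fB ∈ p → rifi q B V ⊆ rifi q p V) :
    rifi q A V ⊆ rifi q B V ∨ rifi q B V ⊆ rifi q A V := by
  classical
  have hnd : q.Nodup := List.Nodup.of_map _ hsjf
  by_contra hcon
  push_neg at hcon
  obtain ⟨hnAB, hnBA⟩ := hcon
  obtain ⟨θ, hθA, hθB⟩ := Set.not_subset.mp hnAB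
  obtain ⟨γ, hγB, hγA⟩ := Set.not_subset.mp hnBA
  -- any two distinct key-equal db-facts of an atom's relation make it harmless
  have hattack : ∀ (x χ : DBFact) (G : DBAtom), G ∈ q → χ.rel = G.rel →
      x ∈ db → χ ∈ db → x ≠ χ → KeyEqual x χ → ∀ v ∈ V, ¬ AttacksVar q G v := by
    intro x χ G hG hrel hx hχ hne hke v hv hatt
    have hcns := hcons v hv G hG hatt
    have hxf : x ∈ db.filter (fun f => f.rel = G.rel) :=
      Finset.mem_filter.mpr ⟨hx, by rw [hke.1, hrel]⟩
    have hχf : χ ∈ db.filter (fun f => f.rel = G.rel) :=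
      Finset.mem_filter.mpr ⟨hχ, hrel⟩
    exact hne (hcns x hxf χ hχf hke)
  set meas : Finset DBFact → Finset DBFact → ℕ := fun P0 P1 =>
    ((P0 \ P1).filter (fun x => ∃ F ∈ q, x.rel = F.rel)).card with hmeasdef
  set Bad : ℕ → Prop := fun n => ∃ P0 P1, IsRepair db P0 ∧ IsRepair db P1 ∧
    fA ∈ P0 ∧ fB ∈ P1 ∧ γ ∉ rifi q P0 V ∧ θ ∉ rifi q P1 V ∧ meas P0 P1 = n
    with hBaddef
  have hbad : ∃ n, Bad n := ⟨meas A B, A, B, hA, hB, hfAA, hfBB, hγA, hθB, rfl⟩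
  obtain ⟨P0, P1, hP0, hP1, hfAP0, hfBP1, hγP0, hθP1, hmeas⟩ := Nat.find_spec hbad
  have hminimal : ∀ P1', IsRepair db P1' → fB ∈ P1' →
      meas P0 P1' < Nat.find hbad → θ ∈ rifi q P1' V := by
    intro P1' h1 h2 hlt
    by_contra hno
    exact Nat.find_min hbad hlt ⟨P0, P1', hP0, h1, hfAP0, h2, hγP0, hno, rfl⟩
  -- γ is realizable in P1
  have hγP1 : γ ∈ rifi q P1 V := hBmin P1 hP1 hfBP1 hγB
  rw [mem_rifi_iff] at hγP1
  obtain ⟨hγd, ε, hεdom, hεext, hεf⟩ := hγP1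
  by_cases hall : ∀ G ∈ q, factOf ε G ∈ P0
  · exact hγP0 (mem_rifi_iff.mpr ⟨hγd, ε, hεdom, hεext, hall⟩)
  push_neg at hall
  obtain ⟨G, hG, hχP0⟩ := hall
  set χ := factOf ε G with hχdef
  have hχP1 : χ ∈ P1 := hεf G hG
  have hχdb : χ ∈ db := hP1.1 hχP1
  have hχrel : χ.rel = G.rel := rfl
  obtain ⟨x, hxP0, hxke⟩ := repair_rep hP0 hχdb
  have hxne : x ≠ χ := fun h => hχP0 (h ▸ hxP0)
  have hGatt : ∀ v ∈ V, ¬ AttacksVar q G v :=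
    hattack x χ G hG rfl (hP0.1 hxP0) hχdb hxne hxke
  by_cases hχB : χ = fB
  · -- the offending fact is fB itself; flip P1 to fA
    have hGrel : G.rel = fA.rel := by rw [← hχrel, hχB, ← hKE.1]
    have hθQ : θ ∈ rifi q (flipR P1 fA) V :=
      hAmin (flipR P1 fA) (flipR_repair hP1 hfA) (mem_flipR_self P1 fA) hθA
    rw [mem_rifi_iff] at hθQ
    obtain ⟨hθd, lam, hlamdom, hlamext, hlamf⟩ := hθQ
    have hlamP1 : ∀ H ∈ q, H ≠ G → factOf lam H ∈ P1 := by
      intro H hH hHG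
      rcases mem_flipR.mp (hlamf H hH) with heq | ⟨hm, _⟩
      · exfalso
        have hrelHG : H.rel = G.rel := by
          have : (factOf lam H).rel = H.rel := rfl
          rw [← this, heq, ← hGrel]
        exact hHG (List.inj_on_of_nodup_map hsjf hH hG hrelHG)
      · exact hm
    by_cases hlamG : factOf lam G = fA
    · have hkeyagree : ∀ y ∈ G.keyVars, lam y = ε y := by
        apply key_agree_of_factOf hG hlamdom hεdom
        show (factOf lam G).keyArgs = (factOf ε G).keyArgs
        rw [hlamG, ← hχdef, hχB]
        exact hKE.2
      have h1 : ∀ H ∈ q.erase G, factOf lam H ∈ P1 := by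
        intro H hH
        obtain ⟨hne, hHq⟩ := hnd.mem_erase_iff.mp hH
        exact hlamP1 H hHq hne
      exact hθP1 (rifi_transport hnd hG hP1.2.1 hGatt hθd hlamdom hεdom hlamext h1 hεf hkeyagree)
    · apply hθP1
      rw [mem_rifi_iff]
      refine ⟨hθd, lam, hlamdom, hlamext, ?_⟩
      intro H hH
      by_cases hHG : H = G
      · subst hHG
        rcases mem_flipR.mp (hlamf H hH) with heq | ⟨hm, _⟩
        · exact absurd heq hlamG
        · exact hm
      · exact hlamP1 H hH hHG
  · -- the offending fact is in another group; flip P1 at that group to x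
    have hxdb : x ∈ db := hP0.1 hxP0
    have hP1' : IsRepair db (flipR P1 x) := flipR_repair hP1 hxdb
    have hfBP1' : fB ∈ flipR P1 x := by
      rw [mem_flipR]; right
      refine ⟨hfBP1, ?_⟩
      intro hkeB
      have hkeBχ : KeyEqual fB χ := keyEqual_trans hkeB hxke
      exact hχB (hP1.2.1 fB hfBP1 χ hχP1 hkeBχ).symm
    have hxnP1 : x ∉ P1 := by
      intro hxP1
      exact hxne (hP1.2.1 x hxP1 χ hχP1 hxke)
    have hmlt : meas P0 (flipR P1 x) < Nat.find hbad := by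
      rw [← hmeas]
      apply Finset.card_lt_card
      constructor
      · intro z hz
        simp only [Finset.mem_filter, Finset.mem_sdiff] at hz ⊢
        obtain ⟨⟨hzP0, hznP1'⟩, hzrel⟩ := hz
        refine ⟨⟨hzP0, ?_⟩, hzrel⟩
        intro hzP1
        by_cases hzkex : KeyEqual z x
        · have hzx : z = x := hP0.2.1 z hzP0 x hxP0 hzkex
          exact hznP1' (by rw [hzx]; exact mem_flipR_self P1 x)
        · exact hznP1' (mem_flipR.mpr (Or.inr ⟨hzP1, hzkex⟩))
      · intro hsub
        have hxmem : x ∈ (P0 \ P1).filter (fun y => ∃ F ∈ q, y.rel = F.rel) := by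
          simp only [Finset.mem_filter, Finset.mem_sdiff]
          exact ⟨⟨hxP0, hxnP1⟩, ⟨G, hG, by rw [hxke.1, hχrel]⟩⟩
        have := hsub hxmem
        simp only [Finset.mem_filter, Finset.mem_sdiff] at this
        exact this.1.2 (mem_flipR_self P1 x)
    have hθP1' : θ ∈ rifi q (flipR P1 x) V := hminimal _ hP1' hfBP1' hmlt
    rw [mem_rifi_iff] at hθP1'
    obtain ⟨hθd, ρ, hρdom, hρext, hρf⟩ := hθP1'
    have hρP1 : ∀ H ∈ q, H ≠ G → factOf ρ H ∈ P1 := by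
      intro H hH hHG
      rcases mem_flipR.mp (hρf H hH) with heq | ⟨hm, _⟩
      · exfalso
        have hrelHG : H.rel = G.rel := by
          have h0 : (factOf ρ H).rel = H.rel := rfl
          rw [← h0, heq, hxke.1, hχrel]
        exact hHG (List.inj_on_of_nodup_map hsjf hH hG hrelHG)
      · exact hm
    by_cases hρG : factOf ρ G = x
    · have hkeyagree : ∀ y ∈ G.keyVars, ρ y = ε y := by
        apply key_agree_of_factOf hG hρdom hεdom
        show (factOf ρ G).keyArgs = (factOf ε G).keyArgs
        rw [hρG, ← hχdef]
        exact hxke.2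
      have h1 : ∀ H ∈ q.erase G, factOf ρ H ∈ P1 := by
        intro H hH
        obtain ⟨hne, hHq⟩ := hnd.mem_erase_iff.mp hH
        exact hρP1 H hHq hne
      exact hθP1 (rifi_transport hnd hG hP1.2.1 hGatt hθd hρdom hεdom hρext h1 hεf hkeyagree)
    · apply hθP1
      rw [mem_rifi_iff]
      refine ⟨hθd, ρ, hρdom, hρext, ?_⟩
      intro H hH
      by_cases hHG : H = G
      · subst hHG
        rcases mem_flipR.mp (hρf H hH) with heq | ⟨hm, _⟩
        · exact absurd heq hρG
        · exact hm
      · exact hρP1 H hH hHG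


/-- Main lemma: there is a repair whose `rifi` is contained in that of every
repair. -/
lemma main_aux {q : List DBAtom} (hsjf : SelfJoinFree q) {V : Finset Var} :
    ∀ n (db : Finset DBFact), db.card ≤ n →
    (∀ v ∈ V, ∀ F ∈ q, AttacksVar q F v →
        DBConsistent (db.filter (fun f => f.rel = F.rel))) →
    ∃ r, IsRepair db r ∧ ∀ p, IsRepair db p → rifi q r V ⊆ rifi q p V := by
  classical
  intro n
  induction n using Nat.strong_induction_on with
  | _ n ih =>
  intro db hcard hcons
  by_cases hng : ∃ f1 ∈ db, ∃ f2 ∈ db, f1 ≠ f2 ∧ KeyEqual f1 f2 ∧ ∃ F ∈ q, f1.rel = F.rel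
  · obtain ⟨f1, hf1, f2, hf2, hne, hke12, F, hF, hrel⟩ := hng
    set g := db.filter (fun x => KeyEqual x f1) with hgdef
    have hf1g : f1 ∈ g := Finset.mem_filter.mpr ⟨hf1, keyEqual_refl f1⟩
    have hbranch : ∀ f ∈ g, ∃ r, (IsRepair db r ∧ f ∈ r) ∧
        ∀ p, IsRepair db p → f ∈ p → rifi q r V ⊆ rifi q p V := by
      intro f hf
      obtain ⟨hfdb, hkef1⟩ := Finset.mem_filter.mp hf
      have hwit : ∃ f2', f2' ∈ db ∧ f2' ≠ f ∧ KeyEqual f2' f := by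
        by_cases hff1 : f = f1
        · subst hff1
          exact ⟨f2, hf2, fun h => hne h.symm, keyEqual_symm hke12⟩
        · exact ⟨f1, hf1, fun h => hff1 h.symm, keyEqual_symm hkef1⟩
      obtain ⟨f2', hf2'db, hf2'ne, hf2'ke⟩ := hwit
      have hcardlt : (flipR db f).card < db.card :=
        flipR_card_lt hfdb hf2'db hf2'ne hf2'ke
      have hcons' : ∀ v ∈ V, ∀ F' ∈ q, AttacksVar q F' v →
          DBConsistent ((flipR db f).filter (fun x => x.rel = F'.rel)) := by
        intro v hv F' hF' hatt
        exact consistent_mono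
          (Finset.filter_subset_filter _ (flipR_subset (Finset.Subset.refl db) hfdb))
          (hcons v hv F' hF' hatt)
      obtain ⟨r, hr, hrmin⟩ :=
        ih (flipR db f).card (lt_of_lt_of_le hcardlt hcard) (flipR db f) le_rfl hcons'
      rw [freeze_repair_iff hfdb] at hr
      refine ⟨r, hr, ?_⟩
      intro p hp hfp
      exact hrmin p ((freeze_repair_iff hfdb).mpr ⟨hp, hfp⟩)
    choose! vf hvf1 hvf2 using hbranch
    have htotal : ∀ a ∈ g, ∀ b ∈ g, rifi q (vf a) V ⊆ rifi q (vf b) V ∨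
        rifi q (vf b) V ⊆ rifi q (vf a) V := by
      intro a ha b hb
      obtain ⟨hadb, hakef1⟩ := Finset.mem_filter.mp ha
      obtain ⟨hbdb, hbkef1⟩ := Finset.mem_filter.mp hb
      exact rifi_comparable hsjf hcons hadb hbdb
        (keyEqual_trans hakef1 (keyEqual_symm hbkef1))
        (hvf1 a ha).1 (hvf1 a ha).2 (hvf2 a ha)
        (hvf1 b hb).1 (hvf1 b hb).2 (hvf2 b hb)
    obtain ⟨m, hmg, hmmin⟩ := exists_min_total
      (fun a b => rifi q (vf a) V ⊆ rifi q (vf b) V)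
      (fun a b c h1 h2 => h1.trans h2) g ⟨f1, hf1g⟩ htotal
    refine ⟨vf m, (hvf1 m hmg).1, ?_⟩
    intro p hp
    obtain ⟨f', hf'p, hf'ke⟩ := repair_rep hp hf1
    have hf'g : f' ∈ g := Finset.mem_filter.mpr ⟨hp.1 hf'p, hf'ke⟩
    exact (hmmin f' hf'g).trans (hvf2 f' hf'g p hp hf'p)
  · -- no two distinct key-equal facts with a relation of q: all repairs
    -- give the same rifi
    push_neg at hng
    obtain ⟨r, hr⟩ := exists_repair db
    refine ⟨r, hr, ?_⟩
    intro p hp θ hθ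
    rw [mem_rifi_iff] at hθ ⊢
    obtain ⟨hθd, mu, hmud, hmue, hmuf⟩ := hθ
    refine ⟨hθd, mu, hmud, hmue, ?_⟩
    intro F hF
    have hfr := hmuf F hF
    have hfdb : factOf mu F ∈ db := hr.1 hfr
    obtain ⟨f', hf'p, hf'ke⟩ := repair_rep hp hfdb
    by_cases h : f' = factOf mu F
    · rwa [h] at hf'p
    · exact absurd hf'ke.1 (hng f' (hp.1 hf'p) (factOf mu F) hfdb h hf'ke F hF)

end Stmt3

/-- If every atom attacking a variable of V has a consistent relation in db,
some repair realizes the intersection of rifi over all repairs. -/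
theorem stmt3
    (q : List DBAtom) (hsjf : SelfJoinFree q)
    (db : Finset DBFact)
    (V : Finset Var) (hV : V.Nonempty) (hVsub : V ⊆ qVars q)
    (hcons : ∀ v ∈ V, ∀ F ∈ q, AttacksVar q F v →
      DBConsistent (db.filter (fun f => f.rel = F.rel))) :
    ∃ r : Finset DBFact, IsRepair db r ∧
      rifi q r V = ⋂ (s : Finset DBFact) (_ : IsRepair db s), rifi q s V := by
  obtain ⟨r, hr, hmin⟩ := Stmt3.main_aux hsjf db.card db le_rfl hcons
  refine ⟨r, hr, ?_⟩
  apply Set.eq_of_subset_of_subset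
  · intro θ hθ
    rw [Set.mem_iInter₂]
    intro s hs
    exact hmin s hs hθ
  · intro θ hθ
    rw [Set.mem_iInter₂] at hθ
    exact hθ r hr
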